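/- Let ⋆ be a continuous t-norm on I = [0,1] and △ a binary operation on I. If the convolution ⋏ is a t-norm on L, then for every y ∈ (0,1) the functions x ↦ x △ y and x ↦ y △ x are increasing on I. -/

import Mathlib

open unitInterval

noncomputable section

instance : Fact ((0:ℝ) ≤ 1) := ⟨zero_le_one⟩

/-- A function `f : I → I` is normal if `sup {f x : x ∈ I} = 1`. -/
def IsNormal (f : I → I) : Prop := sSup (Set.range f) = 1

/-- A function `f : I → I` is convex if `f y ≥ min (f x) (f z)` whenever `x ≤ y ≤ z`. -/
def IsConvexFn (f : I → I) : Prop :=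
  ∀ x y z : I, x ≤ y → y ≤ z → min (f x) (f z) ≤ f y

/-- Membership in `L`, the set of normal convex functions from `I` to `I`. -/
def InL (f : I → I) : Prop := IsNormal f ∧ IsConvexFn f

/-- A t-norm on `I`: commutative, associative, increasing in each argument,
with neutral element `1`. -/
def IsTnorm (op : I → I → I) : Prop :=
  (∀ x y : I, op x y = op y x) ∧
  (∀ x y z : I, op (op x y) z = op x (op y z)) ∧
  (∀ y : I, Monotone fun x => op x y) ∧
  (∀ x : I, Monotone fun y => op x y) ∧
  (∀ x : I, op 1 x = x) ∧ (∀ x : I, op x 1 = x)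

/-- A t-conorm on `I`: commutative, associative, increasing in each argument,
with neutral element `0`. -/
def IsTconorm (op : I → I → I) : Prop :=
  (∀ x y : I, op x y = op y x) ∧
  (∀ x y z : I, op (op x y) z = op x (op y z)) ∧
  (∀ y : I, Monotone fun x => op x y) ∧
  (∀ x : I, Monotone fun y => op x y) ∧
  (∀ x : I, op 0 x = x) ∧ (∀ x : I, op x 0 = x)

/-- Continuity of a binary operation on `I`, as a map `I × I → I`. -/
def IsCont (op : I → I → I) : Prop := Continuous fun p : I × I => op p.1 p.2

/-- The convolution `(f ⋏ g)(x) = sup {f y ⋆ g z : y △ z = x}` (`star` playing the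
role of `⋆` and `tri` the role of `△`); the sup of the empty set is `0`. -/
def conv (star tri : I → I → I) (f g : I → I) : I → I :=
  fun x => sSup {a : I | ∃ y z : I, tri y z = x ∧ a = star (f y) (g z)}

/-- The meet `(f ⊓ g)(x) = sup {min (f y) (g z) : min y z = x}`. -/
def fmeet (f g : I → I) : I → I :=
  fun x => sSup {a : I | ∃ y z : I, min y z = x ∧ a = min (f y) (g z)}

/-- The partial order `f ⊑ g` iff `f ⊓ g = f`. -/
def sqle (f g : I → I) : Prop := fmeet f g = f

/-- The characteristic function `χ_{x}` of the singleton `{x}`. -/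
def chi (x : I) : I → I := fun t => if t = x then 1 else 0

/-- A binary operation `C` on functions is a t-norm on `L` if `L` is closed under `C` and,
on `L`, `C` is commutative, associative, has `χ_{1}` as neutral element, and is increasing
in each argument with respect to `⊑`. -/
def IsTnormOnL (C : (I → I) → (I → I) → (I → I)) : Prop :=
  (∀ f g, InL f → InL g → InL (C f g)) ∧
  (∀ f g, InL f → InL g → C f g = C g f) ∧
  (∀ f g h, InL f → InL g → InL h → C (C f g) h = C f (C g h)) ∧
  (∀ f, InL f → C f (chi 1) = f) ∧
  (∀ f g h, InL f → InL g → InL h → sqle g h → sqle (C f g) (C f h))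

/-- A binary operation `C` on functions is a t-conorm on `L` if `L` is closed under `C` and,
on `L`, `C` is commutative, associative, has `χ_{0}` as neutral element, and is increasing
in each argument with respect to `⊑`. -/
def IsTconormOnL (C : (I → I) → (I → I) → (I → I)) : Prop :=
  (∀ f g, InL f → InL g → InL (C f g)) ∧
  (∀ f g, InL f → InL g → C f g = C g f) ∧
  (∀ f g h, InL f → InL g → InL h → C (C f g) h = C f (C g h)) ∧
  (∀ f, InL f → C f (chi 0) = f) ∧
  (∀ f g h, InL f → InL g → InL h → sqle g h → sqle (C f g) (C f h))

/-- `f^L (x) = sup {f y : y ≤ x}`. -/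
def fL (f : I → I) : I → I := fun x => sSup (f '' Set.Iic x)

/-- `f^R (x) = sup {f y : y ≥ x}`. -/
def fR (f : I → I) : I → I := fun x => sSup (f '' Set.Ici x)

/-- The function `V_x (t) = (x - 1) * t + 1`. -/
def Vfn (x : I) : I → I := fun t =>
  ⟨(x.1 - 1) * t.1 + 1, by
    obtain ⟨hx0, hx1⟩ := x.2; obtain ⟨ht0, ht1⟩ := t.2
    constructor <;> nlinarith⟩


lemma sSup_eq_one_of_mem' {S : Set I} (h1 : (1:I) ∈ S) : sSup S = 1 :=
  le_antisymm (sSup_le fun _ _ => le_one') (le_sSup h1)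

lemma sSup_eq_zero_of_forall {S : Set I} (h0 : ∀ x ∈ S, x = (0:I)) : sSup S = 0 :=
  le_antisymm (sSup_le fun x hx => (h0 x hx).le) nonneg'

lemma chi_inL (a : I) : InL (chi a) := by
  constructor
  · apply sSup_eq_one_of_mem'
    exact ⟨a, by simp [chi]⟩
  · intro x y z hxy hyz
    by_cases hx : x = a
    · by_cases hz : z = a
      · have hya : y = a := le_antisymm (le_of_le_of_eq hyz hz) (le_of_eq_of_le hx.symm hxy)
        have : chi a y = 1 := if_pos hya
        rw [this]; exact le_one'
      · exact le_trans (le_of_le_of_eq (min_le_right _ _) (if_neg hz)) nonneg'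
    · exact le_trans (le_of_le_of_eq (min_le_left _ _) (if_neg hx)) nonneg'

lemma star_zero_left (star : I → I → I) (hstar : IsTnorm star) (t : I) :
    star 0 t = 0 := by
  have h1 : star 0 t ≤ star 0 1 := hstar.2.2.2.1 0 le_one'
  rw [hstar.2.2.2.2.2 0] at h1
  exact le_antisymm h1 nonneg'

lemma star_zero_right (star : I → I → I) (hstar : IsTnorm star) (t : I) :
    star t 0 = 0 := by
  rw [hstar.1]; exact star_zero_left star hstar t

lemma conv_chi (star tri : I → I → I) (hstar : IsTnorm star) (a b : I) :
    conv star tri (chi a) (chi b) = chi (tri a b) := by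
  funext x
  unfold conv chi
  by_cases hx : x = tri a b
  · rw [if_pos hx]
    apply sSup_eq_one_of_mem'
    refine ⟨a, b, hx.symm, ?_⟩
    simp [hstar.2.2.2.2.1 1]
  · rw [if_neg hx]
    apply sSup_eq_zero_of_forall
    rintro v ⟨y, z, hyz, rfl⟩
    by_cases hy : y = a
    · by_cases hz : z = b
      · exact absurd (hyz.symm.trans (by rw [hy, hz])) hx
      · rw [if_neg hz]; exact star_zero_right star hstar _
    · rw [if_neg hy]; exact star_zero_left star hstar _

lemma fmeet_chi (a b : I) : fmeet (chi a) (chi b) = chi (min a b) := by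
  funext x
  unfold fmeet chi
  by_cases hx : x = min a b
  · rw [if_pos hx]
    apply sSup_eq_one_of_mem'
    exact ⟨a, b, hx.symm, by simp⟩
  · rw [if_neg hx]
    apply sSup_eq_zero_of_forall
    rintro v ⟨y, z, hyz, rfl⟩
    by_cases hy : y = a
    · by_cases hz : z = b
      · exact absurd (hyz.symm.trans (by rw [hy, hz])) hx
      · simp [hz]
    · simp [hy]

lemma chi_injective : Function.Injective (chi : I → I → I) := by
  intro a b hab
  have := congrFun hab a
  simp [chi] at this
  by_contra hne
  exact hne this

lemma sqle_chi_iff (a b : I) : sqle (chi a) (chi b) ↔ a ≤ b := by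
  unfold sqle
  rw [fmeet_chi]
  constructor
  · intro hh
    have := chi_injective hh
    exact min_eq_left_iff.mp this
  · intro hh
    rw [min_eq_left hh]

theorem stmt_17 (star tri : I → I → I) (hstar : IsTnorm star) (hstarc : IsCont star)
    (h : IsTnormOnL (conv star tri)) :
    ∀ y : I, 0 < y → y < 1 →
      Monotone (fun x => tri x y) ∧ Monotone (fun x => tri y x) := by
  have key : ∀ a b : I, a ≤ b → ∀ c : I, tri c a ≤ tri c b := by
    intro a b hab c
    have hm := h.2.2.2.2 (chi c) (chi a) (chi b) (chi_inL c) (chi_inL a) (chi_inL b)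
      ((sqle_chi_iff a b).mpr hab)
    rw [conv_chi star tri hstar, conv_chi star tri hstar] at hm
    exact (sqle_chi_iff _ _).mp hm
  have comm : ∀ a b : I, tri a b = tri b a := by
    intro a b
    have := h.2.1 (chi a) (chi b) (chi_inL a) (chi_inL b)
    rw [conv_chi star tri hstar, conv_chi star tri hstar] at this
    exact chi_injective this
  intro y _ _
  refine ⟨?_, fun a b hab => key a b hab y⟩
  intro a b hab
  simp only
  rw [comm a y, comm b y]
  exact key a b hab y
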